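/- Let U be a nonempty convex subset of ℝᵈ, β ∈ (0,1), η, y∞ ∈ ℝⁿ, ψ : ℝⁿ × U → ℝ and g : ℝⁿ × U → ℝⁿ. Let (ŷ, û) with ŷ a sequence in ℝⁿ converging to y∞ and û ∈ ℓ∞(ℕ, U), and let p ∈ ℓ¹(ℕ*, ℝⁿ*), satisfy: (i) ŷ_{t+1} = g(ŷ_t, û_t) for all t ∈ ℕ and ŷ₀ = η; (ii) ψ and g are of class C¹ on ℝⁿ × U; (iii) ψ maps bounded subsets of ℝⁿ × U into bounded subsets of ℝ; (iv) p_t = p_{t+1} ∘ D₁g(ŷ_t, û_t) + βᵗ D₁ψ(ŷ_t, û_t) for all t ≥ 1; (v) ⟨p_{t+1} ∘ D₂g(ŷ_t, û_t) + βᵗ D₂ψ(ŷ_t, û_t), u − û_t⟩ ≤ 0 for all u ∈ U and all t ∈ ℕ; (vi) for each t ∈ ℕ the function (y, u) ↦ ⟨p_{t+1}, g(y, u)⟩ + βᵗ ψ(y, u) is concave on ℝⁿ × U. Then (ŷ, û) is a solution of problem (P): it maximizes Σ_{t=0}^{∞} βᵗ ψ(y_t, u_t) over all sequences y in ℝⁿ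 and bounded sequences u with values in U subject to y₀ = η, lim_{t→∞} y_t = y∞, and y_{t+1} = g(y_t, u_t) for all t ∈ ℕ. -/

import Mathlib

open Filter Topology Bornology Set

/-- Gradient inequality for concave functions: a concave function lies below its tangent. -/
lemma concave_le_tangent {E : Type*} [NormedAddCommGroup E] [NormedSpace ℝ E]
    {s : Set E} {f : E → ℝ} (hf : ConcaveOn ℝ s f) {x y : E} (hx : x ∈ s) (hy : y ∈ s)
    {f' : E →L[ℝ] ℝ} (hd : HasFDerivAt f f' x) : f y ≤ f x + f' (y - x) := by
  set φ : ℝ → ℝ := fun t => f (x + t • (y - x)) with hφ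
  have h0 : x + (0 : ℝ) • (y - x) = x := by simp
  have hline : HasDerivAt φ (f' (y - x)) 0 := by
    have h1 : HasDerivAt (fun t : ℝ => x + t • (y - x)) (y - x) 0 := by
      simpa using ((hasDerivAt_id (0 : ℝ)).smul_const (y - x)).const_add x
    have h2 : HasFDerivAt f f' (x + (0 : ℝ) • (y - x)) := by rwa [h0]
    exact h2.comp_hasDerivAt (0 : ℝ) h1
  rw [hasDerivAt_iff_tendsto_slope] at hline
  have hmono : Tendsto (slope φ 0) (𝓝[>] (0 : ℝ)) (𝓝 (f' (y - x))) :=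
    hline.mono_left (nhdsWithin_mono 0 (fun t ht => ne_of_gt ht))
  have hev : ∀ᶠ t in 𝓝[>] (0 : ℝ), f y - f x ≤ slope φ 0 t := by
    filter_upwards [Ioc_mem_nhdsGT (show (0 : ℝ) < 1 by
      norm_num)] with t ht
    have ht0 : 0 < t := ht.1
    have ht1 : t ≤ 1 := ht.2
    have hcomb : (1 - t) • f x + t • f y ≤ f ((1 - t) • x + t • y) :=
      hf.2 hx hy (by linarith) (le_of_lt ht0) (by ring)
    have heq : (1 - t) • x + t • y = x + t • (y - x) := by
      rw [sub_smul, one_smul, smul_sub]; abel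
    rw [heq] at hcomb
    have hφ0 : φ 0 = f x := by simp [hφ]
    have hslope : slope φ 0 t = (φ t - f x) / t := by
      rw [slope_def_field, hφ0]; ring_nf
    rw [hslope, le_div_iff₀ ht0]
    have : (1 - t) * f x + t * f y ≤ φ t := by simpa [smul_eq_mul, hφ] using hcomb
    nlinarith
  have := ge_of_tendsto hmono hev
  linarith

theorem stmt_19 {n d : ℕ}
    (U : Set (Fin d → ℝ)) (hUne : U.Nonempty) (hUconv : Convex ℝ U)
    (β : ℝ) (hβ : 0 < β ∧ β < 1) (η yinf : Fin n → ℝ)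
    (ψ : (Fin n → ℝ) → (Fin d → ℝ) → ℝ)
    (g : (Fin n → ℝ) → (Fin d → ℝ) → (Fin n → ℝ))
    (yhat : ℕ → (Fin n → ℝ)) (uhat : ℕ → (Fin d → ℝ))
    (hyhatlim : Tendsto yhat atTop (𝓝 yinf))
    (huhatU : ∀ t, uhat t ∈ U) (huhatbd : IsBounded (Set.range uhat))
    (p : ℕ → ((Fin n → ℝ) →L[ℝ] ℝ)) (hp : Summable fun t => ‖p t‖)
    -- (i)
    (hinit : yhat 0 = η) (hdyn : ∀ t : ℕ, yhat (t + 1) = g (yhat t) (uhat t))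
    -- (ii): ψ, g of class C¹ on ℝⁿ × U
    (U1 : Set (Fin d → ℝ)) (hU1open : IsOpen U1) (hUU1 : U ⊆ U1)
    (hψ : ContDiffOn ℝ 1 (fun q : (Fin n → ℝ) × (Fin d → ℝ) => ψ q.1 q.2) (Set.univ ×ˢ U1))
    (hg : ContDiffOn ℝ 1 (fun q : (Fin n → ℝ) × (Fin d → ℝ) => g q.1 q.2) (Set.univ ×ˢ U1))
    -- (iii): ψ maps bounded subsets of ℝⁿ × U into bounded subsets of ℝ
    (hψbdd : ∀ s : Set ((Fin n → ℝ) × (Fin d → ℝ)), s ⊆ Set.univ ×ˢ U → IsBounded s →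
      IsBounded ((fun q : (Fin n → ℝ) × (Fin d → ℝ) => ψ q.1 q.2) '' s))
    -- (iv): adjoint equation
    (hAE : ∀ t : ℕ, 1 ≤ t →
      p t = (p (t + 1)).comp (fderiv ℝ (fun y => g y (uhat t)) (yhat t))
        + β ^ t • fderiv ℝ (fun y => ψ y (uhat t)) (yhat t))
    -- (v): weak maximum principle
    (hWM : ∀ t : ℕ, ∀ u ∈ U,
      (p (t + 1)) (fderiv ℝ (fun v => g (yhat t) v) (uhat t) (u - uhat t))
        + β ^ t * (fderiv ℝ (fun v => ψ (yhat t) v) (uhat t) (u - uhat t)) ≤ 0)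
    -- (vi): concavity of the Hamiltonian
    (hconc : ∀ t : ℕ, ConcaveOn ℝ (Set.univ ×ˢ U)
      (fun q : (Fin n → ℝ) × (Fin d → ℝ) => (p (t + 1)) (g q.1 q.2) + β ^ t * ψ q.1 q.2)) :
    -- conclusion: (ŷ, û) solves (P)
    ∀ (y : ℕ → (Fin n → ℝ)) (u : ℕ → (Fin d → ℝ)),
      Tendsto y atTop (𝓝 yinf) → (∀ t, u t ∈ U) → IsBounded (Set.range u) →
      y 0 = η → (∀ t : ℕ, y (t + 1) = g (y t) (u t)) →
      (∑' t : ℕ, β ^ t * ψ (y t) (u t)) ≤ ∑' t : ℕ, β ^ t * ψ (yhat t) (uhat t) := by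
  intro y u hylim huU hubd hy0 hydyn
  obtain ⟨hβ0, hβ1⟩ := hβ
  -- boundedness of ψ along admissible trajectories
  have hbd : ∀ (Y : ℕ → Fin n → ℝ) (V : ℕ → Fin d → ℝ), Tendsto Y atTop (𝓝 yinf) →
      (∀ t, V t ∈ U) → IsBounded (Set.range V) → ∃ C, ∀ t, |ψ (Y t) (V t)| ≤ C := by
    intro Y V hY hV hVb
    have hsub : Set.range (fun t => ((Y t, V t) : (Fin n → ℝ) × (Fin d → ℝ)))
        ⊆ Set.range Y ×ˢ Set.range V := by
      rintro q ⟨t, rfl⟩; exact ⟨⟨t, rfl⟩, ⟨t, rfl⟩⟩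
    have hsb : IsBounded (Set.range (fun t => ((Y t, V t) : (Fin n → ℝ) × (Fin d → ℝ)))) :=
      ((Metric.isBounded_range_of_tendsto Y hY).prod hVb).subset hsub
    have hsU : Set.range (fun t => ((Y t, V t) : (Fin n → ℝ) × (Fin d → ℝ)))
        ⊆ Set.univ ×ˢ U := by
      rintro q ⟨t, rfl⟩; exact ⟨mem_univ _, hV t⟩
    obtain ⟨C, hC⟩ := isBounded_iff_forall_norm_le.1 (hψbdd _ hsU hsb)
    refine ⟨C, fun t => ?_⟩
    have : ψ (Y t) (V t) ∈ (fun q : (Fin n → ℝ) × (Fin d → ℝ) => ψ q.1 q.2) ''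
        Set.range (fun t => ((Y t, V t) : (Fin n → ℝ) × (Fin d → ℝ))) := ⟨_, ⟨t, rfl⟩, rfl⟩
    simpa [Real.norm_eq_abs] using hC _ this
  obtain ⟨C₁, hC₁⟩ := hbd y u hylim huU hubd
  obtain ⟨C₂, hC₂⟩ := hbd yhat uhat hyhatlim huhatU huhatbd
  -- summability of both series
  have hsummable : ∀ (C : ℝ) (f : ℕ → ℝ), (∀ t, |f t| ≤ C) →
      Summable (fun t => β ^ t * f t) := by
    intro C f hf
    refine Summable.of_norm_bounded
      ((summable_geometric_of_lt_one hβ0.le hβ1).mul_left C) (fun t => ?_)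
    have hb : (0 : ℝ) ≤ β ^ t := pow_nonneg hβ0.le t
    rw [Real.norm_eq_abs, abs_mul, abs_of_nonneg hb, mul_comm]
    exact mul_le_mul_of_nonneg_right (hf t) hb
  have hs1 : Summable (fun t => β ^ t * ψ (y t) (u t)) := hsummable C₁ _ hC₁
  have hs2 : Summable (fun t => β ^ t * ψ (yhat t) (uhat t)) := hsummable C₂ _ hC₂
  -- the key pointwise inequality coming from concavity of the Hamiltonian
  have key : ∀ t : ℕ,
      β ^ t * ψ (y t) (u t) - β ^ t * ψ (yhat t) (uhat t)
        ≤ (p t) (y t - yhat t) - (p (t + 1)) (y (t + 1) - yhat (t + 1)) := by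
    intro t
    set z : (Fin n → ℝ) × (Fin d → ℝ) := (yhat t, uhat t) with hz
    have hzU1 : z ∈ (Set.univ ×ˢ U1 : Set ((Fin n → ℝ) × (Fin d → ℝ))) :=
      ⟨mem_univ _, hUU1 (huhatU t)⟩
    have hopen : IsOpen ((Set.univ : Set (Fin n → ℝ)) ×ˢ U1) := isOpen_univ.prod hU1open
    have hψd : DifferentiableAt ℝ (fun q : (Fin n → ℝ) × (Fin d → ℝ) => ψ q.1 q.2) z :=
      (hψ.differentiableOn one_ne_zero).differentiableAt (hopen.mem_nhds hzU1)
    have hgd : DifferentiableAt ℝ (fun q : (Fin n → ℝ) × (Fin d → ℝ) => g q.1 q.2) z :=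
      (hg.differentiableOn one_ne_zero).differentiableAt (hopen.mem_nhds hzU1)
    set Dg := fderiv ℝ (fun q : (Fin n → ℝ) × (Fin d → ℝ) => g q.1 q.2) z with hDg
    set Dψ := fderiv ℝ (fun q : (Fin n → ℝ) × (Fin d → ℝ) => ψ q.1 q.2) z with hDψ
    -- derivative of the Hamiltonian
    have hH : HasFDerivAt
        (fun q : (Fin n → ℝ) × (Fin d → ℝ) => (p (t + 1)) (g q.1 q.2) + β ^ t * ψ q.1 q.2)
        ((p (t + 1)).comp Dg + (β ^ t) • Dψ) z := by
      exact ((p (t + 1)).hasFDerivAt.comp z hgd.hasFDerivAt).add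
        (hψd.hasFDerivAt.const_mul (β ^ t))
    -- partial derivatives
    have h1g : fderiv ℝ (fun y' => g y' (uhat t)) (yhat t)
        = Dg.comp (ContinuousLinearMap.inl ℝ (Fin n → ℝ) (Fin d → ℝ)) :=
      by have h := (hgd.hasFDerivAt.comp (yhat t) (hasFDerivAt_prodMk_left (𝕜 := ℝ) (yhat t) (uhat t))).fderiv; exact h
    have h1ψ : fderiv ℝ (fun y' => ψ y' (uhat t)) (yhat t)
        = Dψ.comp (ContinuousLinearMap.inl ℝ (Fin n → ℝ) (Fin d → ℝ)) :=
      by have h := (hψd.hasFDerivAt.comp (yhat t) (hasFDerivAt_prodMk_left (𝕜 := ℝ) (yhat t) (uhat t))).fderiv; exact h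
    have h2g : fderiv ℝ (fun v => g (yhat t) v) (uhat t)
        = Dg.comp (ContinuousLinearMap.inr ℝ (Fin n → ℝ) (Fin d → ℝ)) :=
      by have h := (hgd.hasFDerivAt.comp (uhat t) (hasFDerivAt_prodMk_right (yhat t) (uhat t))).fderiv; exact h
    have h2ψ : fderiv ℝ (fun v => ψ (yhat t) v) (uhat t)
        = Dψ.comp (ContinuousLinearMap.inr ℝ (Fin n → ℝ) (Fin d → ℝ)) :=
      by have h := (hψd.hasFDerivAt.comp (uhat t) (hasFDerivAt_prodMk_right (yhat t) (uhat t))).fderiv; exact h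
    -- apply the tangent inequality
    have hzU : z ∈ (Set.univ ×ˢ U : Set ((Fin n → ℝ) × (Fin d → ℝ))) :=
      ⟨mem_univ _, huhatU t⟩
    have hwU : ((y t, u t) : (Fin n → ℝ) × (Fin d → ℝ)) ∈ Set.univ ×ˢ U :=
      ⟨mem_univ _, huU t⟩
    have htan := concave_le_tangent (hconc t) hzU hwU hH
    set v : Fin n → ℝ := y t - yhat t with hv
    set w : Fin d → ℝ := u t - uhat t with hw
    have hvw : ((y t, u t) : (Fin n → ℝ) × (Fin d → ℝ)) - z = (v, w) := by
      simp [hz, hv, hw, Prod.mk_sub_mk]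
    rw [hvw] at htan
    -- expand the derivative term
    have hsplit : ((p (t + 1)).comp Dg + (β ^ t) • Dψ) (v, w)
        = ((p (t + 1)) (Dg (v, 0)) + β ^ t * Dψ (v, 0))
          + ((p (t + 1)) (Dg (0, w)) + β ^ t * Dψ (0, w)) := by
      have h : ((v, w) : (Fin n → ℝ) × (Fin d → ℝ)) = (v, 0) + (0, w) := by simp
      rw [h]
      simp only [ContinuousLinearMap.add_apply, ContinuousLinearMap.comp_apply,
        ContinuousLinearMap.smul_apply, map_add, smul_eq_mul]
      try ring
    -- second variable term is ≤ 0 by the weak maximum principle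
    have hterm2 : (p (t + 1)) (Dg (0, w)) + β ^ t * Dψ (0, w) ≤ 0 := by
      have := hWM t (u t) (huU t)
      rw [h2g, h2ψ] at this
      simpa [ContinuousLinearMap.comp_apply, ContinuousLinearMap.inr_apply, hw] using this
    -- first variable term equals (p t) v
    have hterm1 : (p (t + 1)) (Dg (v, 0)) + β ^ t * Dψ (v, 0) = (p t) v := by
      rcases Nat.eq_zero_or_pos t with ht0 | ht1
      · have hv0 : v = 0 := by
          rw [hv, ht0, hy0, hinit, sub_self]
        have h00 : ((0, 0) : (Fin n → ℝ) × (Fin d → ℝ)) = 0 := rfl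
        simp [hv0, h00]
      · have := hAE t ht1
        have h := congrArg (fun (L : (Fin n → ℝ) →L[ℝ] ℝ) => L v) this
        simp only [ContinuousLinearMap.add_apply, ContinuousLinearMap.comp_apply,
          ContinuousLinearMap.smul_apply, smul_eq_mul, h1g, h1ψ,
          ContinuousLinearMap.inl_apply] at h
        exact h.symm
    -- combine
    rw [hsplit, hterm1] at htan
    have htan' : (p (t + 1)) (y (t + 1)) + β ^ t * ψ (y t) (u t)
        ≤ (p (t + 1)) (yhat (t + 1)) + β ^ t * ψ (yhat t) (uhat t)
          + ((p t) v + ((p (t + 1)) (Dg (0, w)) + β ^ t * Dψ (0, w))) := by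
      simpa [hz, ← hydyn t, ← hdyn t] using htan
    have hps : (p (t + 1)) (y (t + 1) - yhat (t + 1))
        = (p (t + 1)) (y (t + 1)) - (p (t + 1)) (yhat (t + 1)) := map_sub _ _ _
    linarith [hterm2, htan', hps]
  -- telescoping and passing to the limit
  set q : ℕ → ℝ := fun t => (p t) (y t - yhat t) with hqdef
  have hq0 : q 0 = 0 := by simp [hqdef, hy0, hinit]
  have hqlim : Tendsto q atTop (𝓝 0) := by
    have hpn : Tendsto (fun t => ‖p t‖) atTop (𝓝 0) := hp.tendsto_atTop_zero
    have hyy : Tendsto (fun t => ‖y t - yhat t‖) atTop (𝓝 ‖yinf - yinf‖) :=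
      (hylim.sub hyhatlim).norm
    have hmul : Tendsto (fun t => ‖p t‖ * ‖y t - yhat t‖) atTop (𝓝 0) := by
      have := hpn.mul hyy
      simpa using this
    have habs : ∀ t, |q t| ≤ ‖p t‖ * ‖y t - yhat t‖ := fun t => by
      simpa only [Real.norm_eq_abs] using (p t).le_opNorm (y t - yhat t)
    have : Tendsto (fun t => |q t|) atTop (𝓝 0) :=
      squeeze_zero (fun t => abs_nonneg _) habs hmul
    simpa [Real.norm_eq_abs] using tendsto_zero_iff_norm_tendsto_zero.2 (by
      simpa [Real.norm_eq_abs] using this)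
  have hsdiff : Summable (fun t => β ^ t * ψ (y t) (u t) - β ^ t * ψ (yhat t) (uhat t)) :=
    hs1.sub hs2
  have hSsum : Tendsto
      (fun T => ∑ t ∈ Finset.range T, (β ^ t * ψ (y t) (u t) - β ^ t * ψ (yhat t) (uhat t)))
      atTop (𝓝 (∑' t, (β ^ t * ψ (y t) (u t) - β ^ t * ψ (yhat t) (uhat t)))) :=
    hsdiff.hasSum.tendsto_sum_nat
  have hSle : ∀ T, (∑ t ∈ Finset.range T, (β ^ t * ψ (y t) (u t) - β ^ t * ψ (yhat t) (uhat t)))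
      ≤ - q T := by
    intro T
    calc (∑ t ∈ Finset.range T, (β ^ t * ψ (y t) (u t) - β ^ t * ψ (yhat t) (uhat t)))
        ≤ ∑ t ∈ Finset.range T, (q t - q (t + 1)) :=
          Finset.sum_le_sum (fun t _ => key t)
      _ = q 0 - q T := Finset.sum_range_sub' q T
      _ = - q T := by rw [hq0]; ring
  have hfinal : (∑' t, (β ^ t * ψ (y t) (u t) - β ^ t * ψ (yhat t) (uhat t))) ≤ 0 := by
    have hneg : Tendsto (fun T => - q T) atTop (𝓝 0) := by
      simpa using hqlim.neg
    exact le_of_tendsto_of_tendsto' hSsum hneg hSle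
  have heq : (∑' t, (β ^ t * ψ (y t) (u t) - β ^ t * ψ (yhat t) (uhat t)))
      = (∑' t, β ^ t * ψ (y t) (u t)) - ∑' t, β ^ t * ψ (yhat t) (uhat t) :=
    hs1.tsum_sub hs2
  linarith [heq ▸ hfinal]
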